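/- Let T be a tree on n vertices, v_1, ..., v_k distinct vertices, and s_1 ≥ ... ≥ s_k positive integers. Let T' = T(v_1, ..., v_k; s_1, ..., s_k) be obtained from T by attaching s_i pendant paths P_2 at v_i for each i (each pendant P_2 contributes a new path of length 2 hanging at v_i). Then λ_i(T') ≥ √(s_i + 1) + λ_n(T) for i = 1, ..., k. -/

import Mathlib

open scoped Classical

/-- Characteristic polynomial of the adjacency matrix of a graph. -/
noncomputable def gCharpoly {V : Type*} [Fintype V] (G : SimpleGraph V) : Polynomial ℝ :=
  letI := Classical.decEq V
  letI := Classical.decRel G.Adj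
  (G.adjMatrix ℝ).charpoly

/-- Adjacency eigenvalues listed in non-increasing order (with multiplicity). -/
noncomputable def eigsDesc {V : Type*} [Fintype V] (G : SimpleGraph V) : List ℝ :=
  ((gCharpoly G).roots.sort (· ≤ ·)).reverse

/-- Number of adjacency eigenvalues in the open interval (-1, 1), with multiplicity. -/
noncomputable def numIn {V : Type*} [Fintype V] (G : SimpleGraph V) : ℕ :=
  ((gCharpoly G).roots.filter (fun x => -1 < x ∧ x < 1)).card

/-- Multiplicity of `lam` as an adjacency eigenvalue. -/
noncomputable def multOf {V : Type*} [Fintype V] (G : SimpleGraph V) (lam : ℝ) : ℕ :=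
  (gCharpoly G).roots.count lam

/-- Nullity: dimension of the kernel of the adjacency matrix. -/
noncomputable def gNullity {V : Type*} [Fintype V] (G : SimpleGraph V) : ℕ :=
  letI := Classical.decRel G.Adj
  Module.finrank ℝ (LinearMap.ker (G.adjMatrix ℝ).mulVecLin)

/-- The tree `T(v₁, …, v_k; s₁, …, s_k)` obtained from `T` by attaching `s i`
pendant paths `P₂` at `v i`: for each `i` and each `j : Fin (s i)` there are a
middle vertex `Sum.inr (Sum.inl ⟨i, j⟩)` adjacent to `v i`, and an end vertex
`Sum.inr (Sum.inr ⟨i, j⟩)` adjacent to the middle vertex. -/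
def attachP2s {V : Type*} {k : ℕ} (T : SimpleGraph V) (v : Fin k → V) (s : Fin k → ℕ) :
    SimpleGraph (V ⊕ ((Σ i : Fin k, Fin (s i)) ⊕ (Σ i : Fin k, Fin (s i)))) :=
  SimpleGraph.fromRel (fun x y =>
    match x, y with
    | Sum.inl a, Sum.inl b => T.Adj a b
    | Sum.inl a, Sum.inr (Sum.inl p) => a = v p.1
    | Sum.inr (Sum.inl p), Sum.inr (Sum.inr q) => p = q
    | _, _ => False)

open Matrix Polynomial

theorem charmatrix_eq {m : Type*} [Fintype m] [DecidableEq m] (M : Matrix m m ℝ) :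
    charmatrix M = (X : ℝ[X]) • (1 : Matrix m m ℝ[X]) - M.map C := by
  ext i j
  by_cases h : i = j <;>
    simp [h, charmatrix_apply, diagonal_apply, Matrix.one_apply, Matrix.smul_apply]

theorem my_charpoly_eq {m : Type*} [Fintype m] [DecidableEq m] {A : Matrix m m ℝ}
    (hA : A.IsHermitian) : A.charpoly = ∏ j, (X - C (hA.eigenvalues j)) := by
  classical
  set U : Matrix m m ℝ := (hA.eigenvectorUnitary : Matrix m m ℝ) with hU
  have hspec : A = U * diagonal (RCLike.ofReal ∘ hA.eigenvalues) * star U := by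
    rw [hU]; exact hA.spectral_theorem
  have h1 : U * star U = 1 := Unitary.coe_mul_star_self hA.eigenvectorUnitary
  set D : Matrix m m ℝ := diagonal (RCLike.ofReal ∘ hA.eigenvalues) with hD
  have key : charmatrix A = U.map C * charmatrix D * (star U).map C := by
    rw [charmatrix_eq, charmatrix_eq, mul_sub, sub_mul, ← Matrix.map_mul, ← Matrix.map_mul,
      ← hspec]
    congr 1
    rw [Matrix.mul_smul, Matrix.mul_one, Matrix.smul_mul, ← Matrix.map_mul, h1]
    simp
  have hdet : A.charpoly = (charmatrix D).det := by
    rw [Matrix.charpoly, key, det_mul, det_mul, mul_comm ((U.map C).det), mul_assoc,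
      ← det_mul, ← Matrix.map_mul, h1]
    simp
  rw [hdet]
  have : charmatrix D = diagonal (fun j => X - C (hA.eigenvalues j)) := by
    ext i j
    by_cases h : i = j
    · subst h; simp [charmatrix_apply_eq, hD, diagonal_apply_eq]
    · simp [charmatrix_apply_ne _ _ _ h, hD, diagonal_apply_ne _ h]
  rw [this, det_diagonal]

theorem my_roots_charpoly {m : Type*} [Fintype m] [DecidableEq m] {A : Matrix m m ℝ}
    (hA : A.IsHermitian) :
    A.charpoly.roots = Finset.univ.val.map hA.eigenvalues := by
  rw [my_charpoly_eq hA]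
  have : (∏ j, (X - C (hA.eigenvalues j))) =
      ((Finset.univ.val.map hA.eigenvalues).map (fun a => X - C a)).prod := by
    rw [Multiset.map_map]; rfl
  rw [this, roots_multiset_prod_X_sub_C]

open Matrix Polynomial

section
variable {m : Type*} [Fintype m] [DecidableEq m] {A : Matrix m m ℝ} (hA : A.IsHermitian)

/-- Expansion of quadratic form and norm in the eigenbasis, packaged together. -/
theorem my_expand (x : m → ℝ) :
    x ⬝ᵥ (A *ᵥ x) = ∑ j, hA.eigenvalues j *
        ((star (hA.eigenvectorUnitary : Matrix m m ℝ) *ᵥ x) j)^2 ∧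
    x ⬝ᵥ x = ∑ j, ((star (hA.eigenvectorUnitary : Matrix m m ℝ) *ᵥ x) j)^2 := by
  classical
  set U : Matrix m m ℝ := (hA.eigenvectorUnitary : Matrix m m ℝ) with hU
  have h1 : U * star U = 1 := Unitary.coe_mul_star_self hA.eigenvectorUnitary
  set y : m → ℝ := star U *ᵥ x with hy
  have hxy : x ᵥ* U = y := by
    rw [hy]
    ext j
    simp [Matrix.vecMul, Matrix.mulVec, dotProduct, Matrix.star_apply, mul_comm]
  constructor
  · conv_lhs => rw [hA.spectral_theorem, Unitary.conjStarAlgAut_apply, ← hU, ← Matrix.mulVec_mulVec, ← Matrix.mulVec_mulVec,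
      Matrix.dotProduct_mulVec, hxy]
    have : diagonal (RCLike.ofReal ∘ hA.eigenvalues) *ᵥ y = fun j => hA.eigenvalues j * y j := by
      ext j; simp [Matrix.mulVec_diagonal]
    rw [this]
    simp only [dotProduct, pow_two]
    exact Finset.sum_congr rfl fun j _ => by ring
  · have : x ⬝ᵥ x = x ⬝ᵥ ((U * star U) *ᵥ x) := by rw [h1]; simp
    rw [this, ← Matrix.mulVec_mulVec, Matrix.dotProduct_mulVec, hxy]
    simp [dotProduct, pow_two, hy]

theorem my_count_ge {r : ℕ} (φ : (Fin r → ℝ) →ₗ[ℝ] (m → ℝ)) (hφ : Function.Injective φ)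
    {c : ℝ} (h : ∀ z, c * (φ z ⬝ᵥ φ z) ≤ (φ z) ⬝ᵥ (A *ᵥ φ z)) :
    r ≤ Fintype.card {j // c ≤ hA.eigenvalues j} := by
  classical
  by_contra hlt
  push_neg at hlt
  set U : Matrix m m ℝ := (hA.eigenvectorUnitary : Matrix m m ℝ) with hU
  let ψ : (m → ℝ) →ₗ[ℝ] ({j // c ≤ hA.eigenvalues j} → ℝ) :=
    { toFun := fun x j => (star U *ᵥ x) j.1
      map_add' := by intro a b; ext j; simp [Matrix.mulVec_add]
      map_smul' := by intro t a; ext j; simp [Matrix.mulVec_smul] }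
  have hnotinj : ¬ Function.Injective (ψ.comp φ) := by
    intro hinj
    have := LinearMap.finrank_le_finrank_of_injective hinj
    simp [Module.finrank_pi] at this
    omega
  rw [injective_iff_map_eq_zero] at hnotinj
  push_neg at hnotinj
  obtain ⟨z, hz0, hzne⟩ := hnotinj
  set x : m → ℝ := φ z with hx
  have hxne : x ≠ 0 := fun hh => hzne (hφ (by rw [map_zero]; exact hx ▸ hh))
  have hyzero : ∀ j, c ≤ hA.eigenvalues j → (star U *ᵥ x) j = 0 := by
    intro j hj
    have := congrFun hz0 ⟨j, hj⟩
    simpa [ψ, hx] using this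
  obtain ⟨hQ, hN⟩ := my_expand hA x
  rw [← hU] at hQ hN
  have hlt2 : x ⬝ᵥ (A *ᵥ x) < c * (x ⬝ᵥ x) := by
    rw [hQ, hN, Finset.mul_sum]
    apply Finset.sum_lt_sum
    · intro j _
      by_cases hj : c ≤ hA.eigenvalues j
      · simp [hyzero j hj]
      · push_neg at hj
        nlinarith [sq_nonneg ((star U *ᵥ x) j)]
    · have : ∃ j, (star U *ᵥ x) j ≠ 0 := by
        by_contra hall
        push_neg at hall
        apply hxne
        have : x ⬝ᵥ x = 0 := by rw [hN]; simp [hall]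
        exact dotProduct_self_eq_zero.mp this
      obtain ⟨j, hj⟩ := this
      refine ⟨j, Finset.mem_univ j, ?_⟩
      have hjc : hA.eigenvalues j < c := by
        by_contra hcc; push_neg at hcc; exact hj (hyzero j hcc)
      have hy2 : 0 < ((star U *ᵥ x) j)^2 := by positivity
      nlinarith
  have := h z
  rw [← hx] at this
  linarith

end


/-- If at least `i+1` elements of `M` are `≥ c`, then the `i`-th entry of the
descending sort of `M` is `≥ c`. -/
theorem getD_desc_ge {M : Multiset ℝ} {c : ℝ} {i : ℕ}
    (h : i + 1 ≤ (M.filter (fun x => c ≤ x)).card) :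
    c ≤ ((M.sort (· ≤ ·)).reverse).getD i 0 := by
  classical
  set L : List ℝ := M.sort (· ≤ ·) with hL
  have hperm : (L : Multiset ℝ) = M := Multiset.sort_eq _ _
  have hsorted : L.Pairwise (· ≤ ·) := Multiset.pairwise_sort _ _
  have hlen : L.length = Multiset.card M := by
    rw [← hperm]; rfl
  have hcard : (L.filter (fun x => decide (c ≤ x))).length ≤ L.length :=
    List.length_filter_le _ _
  have hfc : (M.filter (fun x => c ≤ x)).card = (L.filter (fun x => decide (c ≤ x))).length := by
    rw [← hperm]
    simp [Multiset.filter_coe]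
  have hiN : i < L.length := by
    rw [hfc] at h; omega
  rw [List.getD_eq_getElem _ _ (by simpa using hiN)]
  rw [List.getElem_reverse]
  set p : ℕ := L.length - 1 - i with hp
  by_contra hlt
  push_neg at hlt
  -- all elements at positions ≤ p are < c
  have hsmall : ∀ q (hq : q < L.length), q ≤ p → L[q] < c := by
    intro q hq hqp
    rcases eq_or_lt_of_le hqp with rfl | hqlt
    · simpa using hlt
    · calc L[q] ≤ L[p]'(by omega) := by
            exact List.pairwise_iff_getElem.mp hsorted q p hq (by omega) hqlt
        _ < c := by simpa using hlt
  -- so the filter is contained in the last i positions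
  have hsplit : L = L.take (p+1) ++ L.drop (p+1) := (List.take_append_drop _ _).symm
  have htake : (L.take (p+1)).filter (fun x => decide (c ≤ x)) = [] := by
    rw [List.filter_eq_nil_iff]
    intro a ha
    obtain ⟨q, hq, hgq⟩ := List.getElem_of_mem ha
    have hqlen : q < L.length := by
      have := hq; simp only [List.length_take] at this; omega
    have hqp : q ≤ p := by
      have := hq; simp only [List.length_take] at this; omega
    have : a = L[q] := by rw [← hgq, List.getElem_take]
    rw [this]
    simpa using not_le.mpr (hsmall q hqlen hqp)
  have : (L.filter (fun x => decide (c ≤ x))).length ≤ i := by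
    conv_lhs => rw [hsplit]
    rw [List.filter_append, List.length_append, htake]
    have := List.length_filter_le (fun x => decide (c ≤ x)) (L.drop (p+1))
    simp only [List.length_nil, List.length_drop] at *
    omega
  rw [hfc] at h
  omega

/-- The last entry of the descending sort is a lower bound for all elements. -/
theorem getD_desc_last_le {M : Multiset ℝ} (hM : M ≠ 0) :
    (∀ a ∈ M, ((M.sort (· ≤ ·)).reverse).getD (Multiset.card M - 1) 0 ≤ a) := by
  classical
  set L : List ℝ := M.sort (· ≤ ·) with hL
  have hperm : (L : Multiset ℝ) = M := Multiset.sort_eq _ _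
  have hsorted : L.Pairwise (· ≤ ·) := Multiset.pairwise_sort _ _
  have hlen : L.length = Multiset.card M := by rw [← hperm]; rfl
  have hpos : 0 < L.length := by
    rw [hlen]
    exact Multiset.card_pos.mpr hM
  intro a ha
  rw [List.getD_eq_getElem _ _ (by simp; omega)]
  rw [List.getElem_reverse]
  have h0 : L.length - 1 - (Multiset.card M - 1) = 0 := by omega
  have ha' : a ∈ L := by rw [← hperm] at ha; simpa using ha
  obtain ⟨q, hq, rfl⟩ := List.getElem_of_mem ha'
  rcases Nat.eq_zero_or_pos q with rfl | hq0
  · simp [h0]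
  · have := List.pairwise_iff_getElem.mp hsorted 0 q hpos hq hq0
    simpa [h0] using this

open Matrix
section comb
variable {V : Type*} {k : ℕ}

/-- the spider part of the adjacency matrix -/
noncomputable def Smat (v : Fin k → V) (s : Fin k → ℕ) : Matrix (V ⊕ ((Σ i : Fin k, Fin (s i)) ⊕ (Σ i : Fin k, Fin (s i))))
    (V ⊕ ((Σ i : Fin k, Fin (s i)) ⊕ (Σ i : Fin k, Fin (s i)))) ℝ := fun x y =>
  match x, y with
  | Sum.inl a, Sum.inr (Sum.inl p) => if a = v p.1 then 1 else 0
  | Sum.inr (Sum.inl p), Sum.inl a => if a = v p.1 then 1 else 0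
  | Sum.inr (Sum.inl p), Sum.inr (Sum.inr q) => if p = q then 1 else 0
  | Sum.inr (Sum.inr q), Sum.inr (Sum.inl p) => if p = q then 1 else 0
  | _, _ => 0

/-- the original-tree part of the adjacency matrix -/
noncomputable def Fmat (T : SimpleGraph V) (s : Fin k → ℕ) : Matrix (V ⊕ ((Σ i : Fin k, Fin (s i)) ⊕ (Σ i : Fin k, Fin (s i))))
    (V ⊕ ((Σ i : Fin k, Fin (s i)) ⊕ (Σ i : Fin k, Fin (s i)))) ℝ := fun x y =>
  match x, y with
  | Sum.inl a, Sum.inl b => if T.Adj a b then 1 else 0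
  | _, _ => 0

theorem adj_decomp [Fintype V] (T : SimpleGraph V) (v : Fin k → V) (s : Fin k → ℕ)
    [DecidableRel (attachP2s T v s).Adj] :
    (attachP2s T v s).adjMatrix ℝ = Smat v s + Fmat T s := by
  ext x y
  rw [SimpleGraph.adjMatrix_apply]
  simp only [Matrix.add_apply, attachP2s, SimpleGraph.fromRel_adj]
  rcases x with a | p | p <;> rcases y with b | q | q <;>
    simp only [Smat, Fmat, add_zero, zero_add] <;>
    split_ifs with h1 h2 <;> try rfl
  all_goals simp_all [eq_comm, T.adj_comm]

/-- eigenvector of the spider part attached at `v j` -/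
noncomputable def xvec (v : Fin k → V) (s : Fin k → ℕ) (j : Fin k) :
    (V ⊕ ((Σ i : Fin k, Fin (s i)) ⊕ (Σ i : Fin k, Fin (s i)))) → ℝ := fun w =>
  match w with
  | Sum.inl a => if a = v j then (s j : ℝ) else 0
  | Sum.inr (Sum.inl p) => if p.1 = j then Real.sqrt ((s j : ℝ) + 1) else 0
  | Sum.inr (Sum.inr p) => if p.1 = j then 1 else 0

theorem sum_sigma_fst (s : Fin k → ℕ) (g : Fin k → ℝ) :
    ∑ x : (Σ i : Fin k, Fin (s i)), g x.1 = ∑ l, (s l : ℝ) * g l := by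
  rw [← Finset.univ_sigma_univ, Finset.sum_sigma]
  simp [Finset.sum_const, nsmul_eq_mul]

theorem smat_mulVec [Fintype V] (v : Fin k → V) (hv : Function.Injective v) (s : Fin k → ℕ)
    (j : Fin k) :
    Smat v s *ᵥ xvec v s j = Real.sqrt ((s j : ℝ) + 1) • xvec v s j := by
  classical
  have hnn : (0:ℝ) ≤ (s j : ℝ) + 1 := by positivity
  ext w
  rcases w with a | p | p
  · -- row of an original vertex
    simp only [Matrix.mulVec, dotProduct, Fintype.sum_sum_type, Smat, xvec, Pi.smul_apply,
      smul_eq_mul, zero_mul, Finset.sum_const_zero, add_zero, zero_add]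
    rw [sum_sigma_fst s (fun l => (if a = v l then 1 else 0) * if l = j then
      Real.sqrt ((s j : ℝ) + 1) else 0)]
    rw [Finset.sum_eq_single j]
    · by_cases h : a = v j <;> simp [h] <;> ring
    · intro l _ hl; simp [hl]
    · intro h; exact absurd (Finset.mem_univ j) h
  · -- row of a middle vertex
    simp only [Matrix.mulVec, dotProduct, Fintype.sum_sum_type, Smat, xvec, Pi.smul_apply,
      smul_eq_mul, zero_mul, Finset.sum_const_zero, add_zero, zero_add, ite_mul, one_mul,
      mul_ite, mul_one, mul_zero, ite_self]
    rw [Finset.sum_eq_single (v j) (fun b _ hb => by simp [hb]) (fun h => absurd (Finset.mem_univ _) h),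
      Finset.sum_eq_single p (fun x _ hx => by simp [Ne.symm hx, ite_self]) (fun h => absurd (Finset.mem_univ _) h)]
    simp only [if_pos rfl]
    have hvv : (v j = v p.1) ↔ (p.1 = j) := ⟨fun h => (hv h).symm, fun h => by rw [h]⟩
    by_cases h : p.1 = j
    · rw [if_pos (hvv.mpr h), if_pos h, if_pos h, Real.mul_self_sqrt hnn]; simp
    · rw [if_neg (fun hc => h (hvv.mp hc)), if_neg h, if_neg h, add_zero]; simp
  · -- row of an end vertex
    simp only [Matrix.mulVec, dotProduct, Fintype.sum_sum_type, Smat, xvec, Pi.smul_apply,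
      smul_eq_mul, zero_mul, Finset.sum_const_zero, add_zero, zero_add, ite_mul, one_mul,
      mul_ite, mul_one, mul_zero, ite_self]
    rw [Finset.sum_eq_single p (fun x _ hx => by simp [hx, ite_self]) (fun h => absurd (Finset.mem_univ _) h)]
    by_cases h : p.1 = j <;> simp [h]

theorem xvec_dot_eq_zero [Fintype V] (v : Fin k → V) (hv : Function.Injective v) (s : Fin k → ℕ)
    {a b : Fin k} (hab : a ≠ b) : xvec v s a ⬝ᵥ xvec v s b = 0 := by
  apply Finset.sum_eq_zero
  intro w _
  rcases w with x | p | p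
  · by_cases h1 : x = v a
    · by_cases h2 : x = v b
      · subst h1; exact absurd (hv h2) hab
      · simp [xvec, h2]
    · simp [xvec, h1]
  · by_cases h1 : p.1 = a
    · by_cases h2 : p.1 = b
      · exact absurd (h1 ▸ h2) hab
      · simp [xvec, h2]
    · simp [xvec, h1]
  · by_cases h1 : p.1 = a
    · by_cases h2 : p.1 = b
      · exact absurd (h1 ▸ h2) hab
      · simp [xvec, h2]
    · simp [xvec, h1]

theorem my_sum_dotProduct {m ι : Type*} [Fintype m] (t : Finset ι) (f : ι → m → ℝ)
    (w : m → ℝ) : (∑ l ∈ t, f l) ⬝ᵥ w = ∑ l ∈ t, f l ⬝ᵥ w := by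
  simp only [dotProduct, Finset.sum_apply, Finset.sum_mul]
  rw [Finset.sum_comm]

theorem my_dotProduct_sum {m ι : Type*} [Fintype m] (t : Finset ι) (w : m → ℝ)
    (f : ι → m → ℝ) : w ⬝ᵥ (∑ l ∈ t, f l) = ∑ l ∈ t, w ⬝ᵥ f l := by
  simp only [dotProduct, Finset.sum_apply, Finset.mul_sum]
  rw [Finset.sum_comm]

theorem dot_self_nonneg {m : Type*} [Fintype m] (x : m → ℝ) : 0 ≤ x ⬝ᵥ x :=
  Finset.sum_nonneg fun w _ => mul_self_nonneg _

theorem fmat_quad [Fintype V] (T : SimpleGraph V) [DecidableRel T.Adj] (s : Fin k → ℕ)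
    (z : (V ⊕ ((Σ i : Fin k, Fin (s i)) ⊕ (Σ i : Fin k, Fin (s i)))) → ℝ) :
    z ⬝ᵥ (Fmat T s *ᵥ z) = (z ∘ Sum.inl) ⬝ᵥ ((T.adjMatrix ℝ) *ᵥ (z ∘ Sum.inl)) := by
  simp [Matrix.mulVec, dotProduct, Fintype.sum_sum_type, Fmat, Function.comp,
    SimpleGraph.adjMatrix_apply]

theorem dot_comp_inl_le {m₁ m₂ : Type*} [Fintype m₁] [Fintype m₂] (z : (m₁ ⊕ m₂) → ℝ) :
    (z ∘ Sum.inl) ⬝ᵥ (z ∘ Sum.inl) ≤ z ⬝ᵥ z := by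
  rw [show z ⬝ᵥ z = ∑ w : m₁ ⊕ m₂, z w * z w from rfl, Fintype.sum_sum_type]
  have : (z ∘ Sum.inl) ⬝ᵥ (z ∘ Sum.inl) = ∑ a : m₁, z (Sum.inl a) * z (Sum.inl a) := rfl
  rw [this]
  have h2 : 0 ≤ ∑ b : m₂, z (Sum.inr b) * z (Sum.inr b) :=
    Finset.sum_nonneg fun w _ => mul_self_nonneg _
  linarith
end comb


theorem my_quad_ge {m : Type*} [Fintype m] [DecidableEq m] {A : Matrix m m ℝ}
    (hA : A.IsHermitian) {c : ℝ} (hc : ∀ j, c ≤ hA.eigenvalues j) (x : m → ℝ) :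
    c * (x ⬝ᵥ x) ≤ x ⬝ᵥ (A *ᵥ x) := by
  obtain ⟨hQ, hN⟩ := my_expand hA x
  rw [hQ, hN, Finset.mul_sum]
  exact Finset.sum_le_sum fun j _ => mul_le_mul_of_nonneg_right (hc j) (sq_nonneg _)

theorem stmt15 {V : Type*} [Fintype V] {k : ℕ} (T : SimpleGraph V) (hT : T.IsTree)
    (v : Fin k → V) (hv : Function.Injective v)
    (s : Fin k → ℕ) (hpos : ∀ i, 0 < s i)
    (hanti : ∀ i j : Fin k, i ≤ j → s j ≤ s i) (i : Fin k) :
    Real.sqrt ((s i : ℝ) + 1) + (eigsDesc T).getD (Fintype.card V - 1) 0 ≤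
      (eigsDesc (attachP2s T v s)).getD (i : ℕ) 0 := by
  classical
  letI : DecidableEq V := Classical.decEq V
  letI : DecidableRel T.Adj := Classical.decRel T.Adj
  letI : DecidableRel (attachP2s T v s).Adj := Classical.decRel _
  have hik : (i : ℕ) + 1 ≤ k := i.2
  -- the embedding of `Fin (i+1)` into `Fin k`
  set e : Fin ((i : ℕ) + 1) → Fin k := Fin.castLE hik with he
  have he_inj : Function.Injective e := Fin.castLE_injective hik
  have he_le : ∀ j, e j ≤ i := fun j => by
    have := j.2
    simp only [he, Fin.le_def, Fin.coe_castLE]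
    omega
  -- hermitian adjacency matrices
  have hA : ((T.adjMatrix ℝ)).IsHermitian := by
    have h := SimpleGraph.isSymm_adjMatrix T (α := ℝ)
    rw [Matrix.IsHermitian]
    ext a b
    rw [Matrix.conjTranspose_apply, ← Matrix.IsSymm.apply h a b]
    simp [Matrix.transpose_apply]
  have hA' : (((attachP2s T v s).adjMatrix ℝ)).IsHermitian := by
    have h := SimpleGraph.isSymm_adjMatrix (attachP2s T v s) (α := ℝ)
    rw [Matrix.IsHermitian]
    ext a b
    rw [Matrix.conjTranspose_apply, ← Matrix.IsSymm.apply h a b]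
    simp [Matrix.transpose_apply]
  -- root multisets
  have hgcT : gCharpoly T = (T.adjMatrix ℝ).charpoly := by
    unfold gCharpoly; congr!
  have hgcT' : gCharpoly (attachP2s T v s) = ((attachP2s T v s).adjMatrix ℝ).charpoly := by
    unfold gCharpoly; congr!
  have hrootsT : (gCharpoly T).roots = Finset.univ.val.map hA.eigenvalues := by
    rw [hgcT]; exact my_roots_charpoly hA
  have hrootsT' : (gCharpoly (attachP2s T v s)).roots =
      Finset.univ.val.map hA'.eigenvalues := by
    rw [hgcT']; exact my_roots_charpoly hA'
  have hcardT : Multiset.card (gCharpoly T).roots = Fintype.card V := by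
    rw [hrootsT, Multiset.card_map]; rfl
  -- the smallest eigenvalue of T
  set lam : ℝ := (eigsDesc T).getD (Fintype.card V - 1) 0 with hlam
  have hVne : Nonempty V := hT.isConnected.nonempty
  have hMne : (gCharpoly T).roots ≠ 0 := by
    intro h
    rw [h] at hcardT
    simp at hcardT
    exact absurd hcardT.symm Fintype.card_pos.ne'
  have hlam_le : ∀ j, lam ≤ hA.eigenvalues j := by
    intro j
    have hmem : hA.eigenvalues j ∈ (gCharpoly T).roots := by
      rw [hrootsT]
      exact Multiset.mem_map_of_mem _ (Finset.mem_univ j)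
    have := getD_desc_last_le hMne _ hmem
    rw [hcardT] at this
    exact this
  have hlam_nonpos : lam ≤ 0 := by
    have hsplits : ((T.adjMatrix ℝ)).charpoly.Splits := by
      rw [my_charpoly_eq hA]
      exact Polynomial.Splits.prod fun j _ => Polynomial.Splits.X_sub_C _
    have htr : ((T.adjMatrix ℝ)).trace = (gCharpoly T).roots.sum := by
      rw [hgcT]
      exact Matrix.trace_eq_sum_roots_charpoly_of_splits hsplits
    rw [SimpleGraph.trace_adjMatrix] at htr
    have hsum : (gCharpoly T).roots.sum = ∑ j, hA.eigenvalues j := by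
      rw [hrootsT]; rfl
    have hcard_smul : (Fintype.card V) • lam ≤ ∑ j, hA.eigenvalues j := by
      have h := Finset.card_nsmul_le_sum Finset.univ hA.eigenvalues lam (fun j _ => hlam_le j)
      rwa [Finset.card_univ] at h
    rw [hsum] at htr
    rw [nsmul_eq_mul] at hcard_smul
    rw [← htr] at hcard_smul
    have hcV : (0:ℝ) < (Fintype.card V : ℝ) := by exact_mod_cast Fintype.card_pos
    nlinarith
  -- test vectors
  set X : Fin ((i:ℕ)+1) → (V ⊕ ((Σ i : Fin k, Fin (s i)) ⊕ (Σ i : Fin k, Fin (s i)))) → ℝ :=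
    fun j => xvec v s (e j) with hX
  have hXdot : ∀ a b, a ≠ b → X a ⬝ᵥ X b = 0 := fun a b hab =>
    xvec_dot_eq_zero v hv s (fun h => hab (he_inj h))
  have hXnn : ∀ a, 0 ≤ X a ⬝ᵥ X a := fun a => dot_self_nonneg _
  set c₀ : ℝ := Real.sqrt ((s i : ℝ) + 1) + lam with hc₀
  set φ : (Fin ((i:ℕ)+1) → ℝ) →ₗ[ℝ]
      ((V ⊕ ((Σ i : Fin k, Fin (s i)) ⊕ (Σ i : Fin k, Fin (s i)))) → ℝ) :=
    { toFun := fun z => ∑ l, z l • X l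
      map_add' := by intro a b; simp [add_smul, Finset.sum_add_distrib]
      map_smul' := by intro t a; simp [smul_smul, Finset.smul_sum] } with hφ
  have hφ_apply : ∀ z, φ z = ∑ l, z l • X l := fun z => rfl
  have hφ_inj : Function.Injective φ := by
    rw [injective_iff_map_eq_zero]
    intro z hz
    funext j
    have hw := congrFun hz (Sum.inr (Sum.inr ⟨e j, ⟨0, hpos (e j)⟩⟩))
    rw [hφ_apply] at hw
    simp only [Finset.sum_apply, Pi.smul_apply, smul_eq_mul, Pi.zero_apply] at hw
    rw [Finset.sum_eq_single j (fun l _ hl => by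
        rw [hX]
        show z l * (if e j = e l then (1:ℝ) else 0) = 0
        rw [if_neg (fun hh => hl (he_inj hh).symm), mul_zero])
      (fun h => absurd (Finset.mem_univ _) h)] at hw
    rw [Pi.zero_apply]
    simpa [hX, xvec] using hw
  -- the quadratic form bound on the test subspace
  have hq : ∀ z, c₀ * (φ z ⬝ᵥ φ z) ≤
      φ z ⬝ᵥ (((attachP2s T v s).adjMatrix ℝ) *ᵥ φ z) := by
    intro z
    set x := φ z with hx
    have hxX : ∀ l, x ⬝ᵥ X l = z l * (X l ⬝ᵥ X l) := by
      intro l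
      rw [hx, hφ_apply, my_sum_dotProduct]
      rw [Finset.sum_eq_single l (fun m _ hm => by
          rw [smul_dotProduct, hXdot m l hm, smul_zero])
        (fun h => absurd (Finset.mem_univ _) h)]
      rw [smul_dotProduct, smul_eq_mul]
    have hx2 : x = ∑ l, z l • X l := by rw [hx, hφ_apply]
    have hxx : x ⬝ᵥ x = ∑ l, z l ^ 2 * (X l ⬝ᵥ X l) := by
      nth_rewrite 2 [hx2]
      rw [my_dotProduct_sum]
      refine Finset.sum_congr rfl fun l _ => ?_
      rw [dotProduct_smul, smul_eq_mul, hxX l]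
      ring
    have hSx : Smat v s *ᵥ x = ∑ l, z l • (Real.sqrt ((s (e l) : ℝ) + 1) • X l) := by
      rw [hx2, ← Matrix.mulVecLin_apply, map_sum]
      refine Finset.sum_congr rfl fun l _ => ?_
      rw [_root_.map_smul, Matrix.mulVecLin_apply, hX]
      rw [smat_mulVec v hv s (e l)]
    have hxSx : x ⬝ᵥ (Smat v s *ᵥ x) =
        ∑ l, Real.sqrt ((s (e l) : ℝ) + 1) * (z l ^ 2 * (X l ⬝ᵥ X l)) := by
      rw [hSx, my_dotProduct_sum]
      refine Finset.sum_congr rfl fun l _ => ?_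
      rw [dotProduct_smul, dotProduct_smul, hxX l]
      simp only [smul_eq_mul]
      ring
    have hS_ge : Real.sqrt ((s i : ℝ) + 1) * (x ⬝ᵥ x) ≤ x ⬝ᵥ (Smat v s *ᵥ x) := by
      rw [hxSx, hxx, Finset.mul_sum]
      refine Finset.sum_le_sum fun l _ => ?_
      have hsle : (s i : ℝ) + 1 ≤ (s (e l) : ℝ) + 1 := by
        have := hanti (e l) i (he_le l)
        have : (s i : ℝ) ≤ (s (e l) : ℝ) := by exact_mod_cast this
        linarith
      exact mul_le_mul_of_nonneg_right (Real.sqrt_le_sqrt hsle)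
        (mul_nonneg (sq_nonneg _) (hXnn l))
    have hF_ge : lam * (x ⬝ᵥ x) ≤ x ⬝ᵥ (Fmat T s *ᵥ x) := by
      rw [fmat_quad T s x]
      have h1 := my_quad_ge hA hlam_le (x ∘ Sum.inl)
      have h2 := dot_comp_inl_le x
      have h3 := mul_le_mul_of_nonpos_left h2 hlam_nonpos
      linarith
    have hsplit : x ⬝ᵥ (((attachP2s T v s).adjMatrix ℝ) *ᵥ x) =
        x ⬝ᵥ (Smat v s *ᵥ x) + x ⬝ᵥ (Fmat T s *ᵥ x) := by
      rw [adj_decomp T v s, Matrix.add_mulVec, dotProduct_add]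
    rw [hsplit, hc₀]
    nlinarith [hS_ge, hF_ge]
  -- counting eigenvalues of T' that are ≥ c₀
  have hcount : (i:ℕ) + 1 ≤ Fintype.card {j // c₀ ≤ hA'.eigenvalues j} :=
    my_count_ge hA' φ hφ_inj hq
  have hfilter : i + 1 ≤
      (((gCharpoly (attachP2s T v s)).roots).filter (fun x => c₀ ≤ x)).card := by
    rw [hrootsT', Multiset.filter_map, Multiset.card_map]
    refine le_trans hcount ?_
    rw [Fintype.card_subtype]
    apply le_of_eq
    rw [Finset.card_def, Finset.filter_val]
    exact congrArg Multiset.card (Multiset.filter_congr (fun x _ => Iff.rfl))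
  have hfin := getD_desc_ge hfilter
  exact hfin
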